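/- Suppose w = y₁⋯y_n with each y_i ∈ X ∪ X⁻¹, w is quasi-positive (or w = 1 in F(X)), and some y_i ∈ X⁻¹. Then there exists an index j such that, writing the cyclic rotation y_i ⋯ y_n y_1 ⋯ y_{i-1} = y_i w_L y_j w_R with y_j = y_i⁻¹, both w_L and w_R are quasi-positive elements of F(X). -/

import Mathlib

/-- Quasi-positive: a (possibly empty) product of conjugates of generators. -/
def QuasiPositive {X : Type*} (w : FreeGroup X) : Prop :=
  ∃ l : List (X × FreeGroup X),
    w = (l.map fun p => p.2⁻¹ * FreeGroup.of p.1 * p.2).prod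

namespace QPDev

open FreeGroup

variable {X : Type*}

/-- basic mk lemmas -/
theorem mk_nil : FreeGroup.mk ([] : List (X × Bool)) = 1 := rfl

theorem mk_append (L₁ L₂ : List (X × Bool)) :
    FreeGroup.mk (L₁ ++ L₂) = FreeGroup.mk L₁ * FreeGroup.mk L₂ := (FreeGroup.mul_mk).symm

/-- opaque letter value -/
def letter (p : X × Bool) : FreeGroup X := FreeGroup.mk [p]

theorem mk_cons (p : X × Bool) (L : List (X × Bool)) :
    FreeGroup.mk (p :: L) = letter p * FreeGroup.mk L := by
  rw [letter, FreeGroup.mul_mk]; rfl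

theorem letter_pos (z : X) : letter (z, true) = FreeGroup.of z := rfl

theorem letter_neg (z : X) : letter (z, false) = (FreeGroup.of z)⁻¹ := by
  rw [FreeGroup.of, FreeGroup.inv_mk]; rfl

theorem mk_invRev (L : List (X × Bool)) :
    FreeGroup.mk (FreeGroup.invRev L) = (FreeGroup.mk L)⁻¹ := (FreeGroup.inv_mk).symm

theorem invRev_append (L₁ L₂ : List (X × Bool)) :
    FreeGroup.invRev (L₁ ++ L₂) = FreeGroup.invRev L₂ ++ FreeGroup.invRev L₁ := by
  simp [FreeGroup.invRev]

theorem invRev_cons (p : X × Bool) (L : List (X × Bool)) :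
    FreeGroup.invRev (p :: L) = FreeGroup.invRev L ++ [(p.1, !p.2)] := by
  simp [FreeGroup.invRev]

end QPDev

namespace QPDev2
open QPDev

variable {X : Type*}

/-- block word: represents `(u⁻¹ y u)⁻¹` -/
def blk (p : X × List (X × Bool)) : List (X × Bool) :=
  FreeGroup.invRev p.2 ++ (p.1, false) :: p.2

def cblk : List (X × List (X × Bool)) → List (X × Bool)
  | [] => []
  | p :: A => blk p ++ cblk A

def mu : List (X × List (X × Bool)) → ℕ
  | [] => 0
  | p :: A => (2 * p.2.length + 1) + mu A

def conjx (x : X) (A : List (X × List (X × Bool))) : List (X × List (X × Bool)) :=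
  A.map fun p => (p.1, p.2 ++ [(x, true)])

theorem cblk_append (A B : List (X × List (X × Bool))) :
    cblk (A ++ B) = cblk A ++ cblk B := by
  induction A with
  | nil => rfl
  | cons p A ih => simp [cblk, ih]

theorem mu_append (A B : List (X × List (X × Bool))) : mu (A ++ B) = mu A + mu B := by
  induction A with
  | nil => simp [mu]
  | cons p A ih => simp [mu, ih]; ring

theorem mu_conjx (x : X) (A : List (X × List (X × Bool))) :
    mu (conjx x A) = mu A + 2 * A.length := by
  induction A with
  | nil => rfl
  | cons p A ih => simp [mu, conjx, ih] at *; omega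

theorem mk_blk (p : X × List (X × Bool)) :
    FreeGroup.mk (blk p) = (FreeGroup.mk p.2)⁻¹ * (FreeGroup.of p.1)⁻¹ * FreeGroup.mk p.2 := by
  rw [blk, mk_append, mk_invRev, mk_cons, letter_neg, mul_assoc]

theorem mk_cblk_cons (p : X × List (X × Bool)) (A : List (X × List (X × Bool))) :
    FreeGroup.mk (cblk (p :: A)) = FreeGroup.mk (blk p) * FreeGroup.mk (cblk A) := by
  rw [cblk, mk_append]

theorem mk_cblk_conjx (x : X) (A : List (X × List (X × Bool))) :
    FreeGroup.mk (cblk (conjx x A)) =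
      (FreeGroup.of x)⁻¹ * FreeGroup.mk (cblk A) * FreeGroup.of x := by
  induction A with
  | nil => simp [conjx, cblk, mk_nil]
  | cons p A ih =>
    have : conjx x (p :: A) = (p.1, p.2 ++ [(x, true)]) :: conjx x A := rfl
    rw [this, mk_cblk_cons, ih, mk_cblk_cons, mk_blk, mk_blk]
    simp only [mk_append]
    have hx : FreeGroup.mk [(x, true)] = FreeGroup.of x := rfl
    rw [hx]
    group

theorem qp_inv_cblk (A : List (X × List (X × Bool))) :
    QuasiPositive (FreeGroup.mk (cblk A))⁻¹ := by
  induction A with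
  | nil => exact ⟨[], by simp [cblk, mk_nil]⟩
  | cons p A ih =>
    obtain ⟨lA, hlA⟩ := ih
    refine ⟨lA ++ [(p.1, FreeGroup.mk p.2)], ?_⟩
    rw [mk_cblk_cons, mk_blk, mul_inv_rev]
    simp only [List.map_append, List.prod_append, ← hlA]
    simp
    group

end QPDev2

namespace QPDev3
open QPDev QPDev2

variable {X : Type*}

def wt (w : List (X × Bool)) : ℤ := (w.map fun p => if p.2 then (1 : ℤ) else -1).sum

theorem wt_append (w₁ w₂ : List (X × Bool)) : wt (w₁ ++ w₂) = wt w₁ + wt w₂ := by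
  simp [wt]

theorem wt_cons (p : X × Bool) (w : List (X × Bool)) : wt (p :: w) = (if p.2 then (1:ℤ) else -1) + wt w := by
  simp [wt]

theorem wt_invRev (w : List (X × Bool)) : wt (FreeGroup.invRev w) = -wt w := by
  induction w with
  | nil => simp [wt, FreeGroup.invRev]
  | cons p w ih =>
    rw [invRev_cons, wt_append, ih, wt_cons]
    cases hp : p.2 <;> simp [wt, hp] <;> ring

theorem wt_cblk (A : List (X × List (X × Bool))) : wt (cblk A) = -(A.length : ℤ) := by
  induction A with
  | nil => simp [cblk, wt]
  | cons p A ih =>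
    rw [cblk, wt_append, ih, blk, wt_append, wt_invRev, wt_cons]
    simp

theorem wt_step {w₁ w₂ : List (X × Bool)} (h : FreeGroup.Red.Step w₁ w₂) : wt w₁ = wt w₂ := by
  cases h with
  | @not L₁ L₂ z b =>
    rw [wt_append, wt_append, wt_cons, wt_cons]
    cases b <;> simp <;> ring

theorem wt_red {w₁ w₂ : List (X × Bool)} (h : FreeGroup.Red w₁ w₂) : wt w₁ = wt w₂ := by
  induction h with
  | refl => rfl
  | tail _ hstep ih => rw [ih, wt_step hstep]

theorem wt_eq_of_mk_eq {w₁ w₂ : List (X × Bool)} (h : FreeGroup.mk w₁ = FreeGroup.mk w₂) :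
    wt w₁ = wt w₂ := by
  obtain ⟨L, h₁, h₂⟩ := FreeGroup.Red.exact.mp h
  rw [wt_red h₁, wt_red h₂]

theorem wt_natAbs_le (w : List (X × Bool)) : (wt w).natAbs ≤ w.length := by
  induction w with
  | nil => simp [wt]
  | cons p w ih =>
    rw [wt_cons]
    cases p.2 <;> simp <;> omega

theorem solve_mid {G : Type*} [Group G] {k₁ m k₂ : G} (h : k₁ * (m * k₂) = 1) :
    m = k₁⁻¹ * k₂⁻¹ := by
  have h2 := congrArg (fun z => k₁⁻¹ * z * k₂⁻¹) h
  simpa [mul_assoc] using h2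

end QPDev3

namespace QPDev4
open QPDev QPDev2 QPDev3

variable {X : Type*}

/-- split a two-part concatenation at a distinguished middle letter -/
theorem split2 {α : Type*} (U V G₀ G₁ : List α) (m : α) (h : U ++ V = G₀ ++ m :: G₁) :
    (∃ p₀ p₁, U = p₀ ++ m :: p₁ ∧ G₀ = p₀ ∧ G₁ = p₁ ++ V) ∨
    (∃ p₀ p₁, V = p₀ ++ m :: p₁ ∧ G₀ = U ++ p₀ ∧ G₁ = p₁) := by
  induction U generalizing G₀ with
  | nil => exact Or.inr ⟨G₀, G₁, by simpa using h, by simp, rfl⟩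
  | cons u U ih =>
    cases G₀ with
    | nil =>
      simp at h
      exact Or.inl ⟨[], U, by simp [h.1, h.2], rfl, by simp [h.2]⟩
    | cons g G₀' =>
      simp at h
      rcases ih G₀' h.2 with ⟨p₀, p₁, h1, h2, h3⟩ | ⟨p₀, p₁, h1, h2, h3⟩
      · exact Or.inl ⟨g :: p₀, p₁, by simp [h1, h.1, h2], by simp [h2, h.1], h3⟩
      · exact Or.inr ⟨p₀, p₁, h1, by simp [h2, h.1], h3⟩

theorem split3 {α : Type*} (U V T G₀ G₁ : List α) (m : α)
    (h : U ++ (V ++ T) = G₀ ++ m :: G₁) :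
    (∃ p₀ p₁, U = p₀ ++ m :: p₁ ∧ G₀ = p₀ ∧ G₁ = p₁ ++ (V ++ T)) ∨
    (∃ p₀ p₁, V = p₀ ++ m :: p₁ ∧ G₀ = U ++ p₀ ∧ G₁ = p₁ ++ T) ∨
    (∃ p₀ p₁, T = p₀ ++ m :: p₁ ∧ G₀ = U ++ (V ++ p₀) ∧ G₁ = p₁) := by
  rcases split2 U (V ++ T) G₀ G₁ m h with ⟨p₀, p₁, h1, h2, h3⟩ | ⟨p₀, p₁, h1, h2, h3⟩
  · exact Or.inl ⟨p₀, p₁, h1, h2, h3⟩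
  · rcases split2 V T p₀ p₁ m h1 with ⟨q₀, q₁, g1, g2, g3⟩ | ⟨q₀, q₁, g1, g2, g3⟩
    · exact Or.inr (Or.inl ⟨q₀, q₁, g1, by rw [h2, g2], by rw [h3, g3]⟩)
    · exact Or.inr (Or.inr ⟨q₀, q₁, g1, by rw [h2, g2], by rw [h3, g3]⟩)

/-- split a concatenation of blocks at a distinguished letter -/
theorem splitCblk (A : List (X × List (X × Bool))) (G₀ G₁ : List (X × Bool)) (m : X × Bool)
    (h : cblk A = G₀ ++ m :: G₁) :
    ∃ A₁ y C A₂ p₀ p₁, A = A₁ ++ (y, C) :: A₂ ∧ blk (y, C) = p₀ ++ m :: p₁ ∧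
      G₀ = cblk A₁ ++ p₀ ∧ G₁ = p₁ ++ cblk A₂ := by
  induction A generalizing G₀ G₁ with
  | nil =>
    exfalso
    have h2 : ([] : List (X × Bool)).length = (G₀ ++ m :: G₁).length := by rw [← h]; rfl
    simp at h2
  | cons p A ih =>
    rcases split2 (blk p) (cblk A) G₀ G₁ m (by rw [← h]; rfl) with
      ⟨p₀, p₁, h1, h2, h3⟩ | ⟨p₀, p₁, h1, h2, h3⟩
    · exact ⟨[], p.1, p.2, A, p₀, p₁, by simp, by simpa using h1, by simp [h2, cblk], h3⟩
    · obtain ⟨A₁, y, C, A₂, q₀, q₁, g1, g2, g3, g4⟩ := ih p₀ p₁ h1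
      exact ⟨p :: A₁, y, C, A₂, q₀, q₁, by simp [g1], g2,
        by rw [h2, g3, cblk, List.append_assoc], by rw [h3, g4]⟩

end QPDev4

namespace QPDev5
open QPDev QPDev2 QPDev3 QPDev4

variable {X : Type*}

theorem mk_of_red {w₁ w₂ : List (X × Bool)} (h : FreeGroup.Red w₁ w₂) :
    FreeGroup.mk w₁ = FreeGroup.mk w₂ := by
  induction h with
  | refl => rfl
  | tail _ hstep ih => rw [ih]; exact Quot.sound hstep

/-- Lemma S for a single positive letter: any word representing `of x` contains a positive
occurrence of `x` with trivial words on both sides. -/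
theorem spell (W : List (X × Bool)) (x : X) (h : FreeGroup.mk W = FreeGroup.of x) :
    ∃ G₀ G₁, W = G₀ ++ (x, true) :: G₁ ∧ FreeGroup.mk G₀ = 1 ∧ FreeGroup.mk G₁ = 1 := by
  have h' : FreeGroup.mk W = FreeGroup.mk [(x, true)] := h
  obtain ⟨L, h₁, h₂⟩ := FreeGroup.Red.exact.mp h'
  rw [FreeGroup.Red.singleton_iff] at h₂
  subst h₂
  clear h h'
  induction h₁ using Relation.ReflTransGen.head_induction_on with
  | refl => exact ⟨[], [], rfl, rfl, rfl⟩
  | head hstep _ ih =>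
    obtain ⟨G₀, G₁, hW, h0, h1⟩ := ih
    cases hstep with
    | @not L₁ L₂ z b =>
      rcases split2 L₁ L₂ G₀ G₁ (x, true) hW with
        ⟨p₀, p₁, e1, e2, e3⟩ | ⟨p₀, p₁, e1, e2, e3⟩
      · refine ⟨p₀, p₁ ++ (z, b) :: (z, !b) :: L₂, by rw [e1]; simp, by rw [← e2]; exact h0, ?_⟩
        have : FreeGroup.mk (p₁ ++ (z, b) :: (z, !b) :: L₂) = FreeGroup.mk (p₁ ++ L₂) :=
          Quot.sound (FreeGroup.Red.Step.not)
        rw [this, ← e3]; exact h1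
      · refine ⟨L₁ ++ (z, b) :: (z, !b) :: p₀, p₁, by rw [e1]; simp, ?_, by rw [← e3]; exact h1⟩
        have : FreeGroup.mk (L₁ ++ (z, b) :: (z, !b) :: p₀) = FreeGroup.mk (L₁ ++ p₀) :=
          Quot.sound (FreeGroup.Red.Step.not)
        rw [this, ← e2]; exact h0

end QPDev5

namespace QPMain
open QPDev QPDev2 QPDev3 QPDev4 QPDev5

variable {X : Type*}

theorem main : ∀ (N : ℕ) (A M : List (X × List (X × Bool))) (ρ : List (X × Bool)) (x : X),
    mu A + mu M < N →
    FreeGroup.mk (cblk A ++ (ρ ++ cblk M)) = FreeGroup.of x →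
    ∃ qA qB, ρ = qA ++ (x, true) :: qB ∧ QuasiPositive (FreeGroup.mk qA) ∧
      QuasiPositive (FreeGroup.mk qB) := by
  intro N
  induction N with
  | zero => intro A M ρ x h; exact absurd h (by omega)
  | succ n ih =>
    intro A M ρ x hμ hH
    obtain ⟨G₀, G₁, hW, h0, h1⟩ := spell _ x hH
    rcases split3 (cblk A) ρ (cblk M) G₀ G₁ (x, true) hW with
      ⟨p₀, p₁, e1, e2, e3⟩ | ⟨p₀, p₁, e1, e2, e3⟩ | ⟨p₀, p₁, e1, e2, e3⟩
    · -- the letter lies in cblk A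
      rw [e2] at h0; rw [e3] at h1
      obtain ⟨A₁, y, C, A₂, q₀, q₁, f1, f2, f3, f4⟩ := splitCblk A p₀ p₁ (x, true) e1
      have f2' : FreeGroup.invRev C ++ ([(y, false)] ++ C) = q₀ ++ (x, true) :: q₁ := by
        simpa [blk] using f2
      rcases split3 (FreeGroup.invRev C) [(y, false)] C q₀ q₁ (x, true) f2' with
        ⟨c₀, c₁, g1, g2, g3⟩ | ⟨c₀, c₁, g1, g2, g3⟩ | ⟨c₀, c₁, g1, g2, g3⟩
      · -- case A-a : the letter lies in invRev C
        subst g2 g3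
        rw [f3, mk_append] at h0
        rw [f4] at h1
        have hC : C = FreeGroup.invRev c₁ ++ ((x, false) :: FreeGroup.invRev q₀) := by
          have hg := congrArg FreeGroup.invRev g1
          rw [FreeGroup.invRev_invRev] at hg
          rw [hg, invRev_append, invRev_cons]
          simp
        rw [hC] at h1
        simp only [List.append_assoc, List.cons_append, List.nil_append, mk_append, mk_cons,
          mk_invRev, mk_nil, letter_pos, letter_neg, mul_assoc, one_mul, mul_one] at h1
        have hρ := solve_mid
          (k₁ := FreeGroup.mk c₁ * ((FreeGroup.of y)⁻¹ * ((FreeGroup.mk c₁)⁻¹ *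
            ((FreeGroup.of x)⁻¹ * ((FreeGroup.mk q₀)⁻¹ * FreeGroup.mk (cblk A₂))))))
          (m := FreeGroup.mk ρ) (k₂ := FreeGroup.mk (cblk M))
          (by simpa only [mul_assoc] using h1)
        have hA₁ : FreeGroup.mk (cblk A₁) = (FreeGroup.mk q₀)⁻¹ :=
          mul_eq_one_iff_eq_inv.mp h0
        have hwc : FreeGroup.mk q₀ = FreeGroup.mk (FreeGroup.invRev (cblk A₁)) := by
          rw [mk_invRev, hA₁, inv_inv]
        have hwt : wt q₀ = (A₁.length : ℤ) := by
          rw [wt_eq_of_mk_eq hwc, wt_invRev, wt_cblk]; ring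
        have hlen : A₁.length ≤ q₀.length := by
          have := wt_natAbs_le q₀
          omega
        have hClen : C.length = c₁.length + 1 + q₀.length := by
          rw [hC]; simp [FreeGroup.invRev_length]; omega
        refine ih A₂ (M ++ (y, FreeGroup.invRev c₁) :: conjx x A₁) ρ x ?_ ?_
        · rw [f1, mu_append] at hμ
          simp only [mu, mu_append, mu_conjx, FreeGroup.invRev_length] at hμ ⊢
          omega
        · simp only [cblk_append, cblk, blk, List.append_assoc, List.cons_append,
            List.nil_append, mk_append, mk_cons, mk_invRev, mk_nil, mk_cblk_conjx,
            FreeGroup.invRev_invRev, letter_pos, letter_neg, mul_assoc, one_mul, mul_one]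
          rw [hρ, hA₁]
          group
      · exfalso; cases c₀ <;> simp_all
      · -- case A-c : the letter lies in C
        subst g3
        rw [f3, g2, g1, mk_append] at h0
        rw [f4] at h1
        simp only [invRev_append, invRev_cons, Bool.not_true, List.append_assoc,
          List.cons_append, List.nil_append, mk_append, mk_cons, mk_invRev, mk_nil,
          letter_pos, letter_neg, mul_assoc, one_mul, mul_one, mul_inv_rev, inv_inv,
          FreeGroup.invRev_empty] at h0 h1
        have hρ := solve_mid
          (k₁ := FreeGroup.mk q₁ * FreeGroup.mk (cblk A₂))
          (m := FreeGroup.mk ρ) (k₂ := FreeGroup.mk (cblk M))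
          (by simpa only [mul_assoc] using h1)
        have hA₁ := solve_mid (k₁ := (1 : FreeGroup X)) (m := FreeGroup.mk (cblk A₁))
          (k₂ := (FreeGroup.mk q₁)⁻¹ * ((FreeGroup.of x)⁻¹ * ((FreeGroup.mk c₀)⁻¹ *
            ((FreeGroup.of y)⁻¹ * FreeGroup.mk c₀))))
          (by simpa only [one_mul, mul_assoc] using h0)
        have hq₁val := solve_mid (k₁ := FreeGroup.mk (cblk A₁)) (m := (FreeGroup.mk q₁)⁻¹)
          (k₂ := (FreeGroup.of x)⁻¹ * ((FreeGroup.mk c₀)⁻¹ *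
            ((FreeGroup.of y)⁻¹ * FreeGroup.mk c₀)))
          (by simpa only [mul_assoc] using h0)
        have hq₁ : FreeGroup.mk q₁ = (FreeGroup.of x)⁻¹ * ((FreeGroup.mk c₀)⁻¹ *
            ((FreeGroup.of y)⁻¹ * (FreeGroup.mk c₀ * FreeGroup.mk (cblk A₁)))) := by
          rw [← inv_inv (FreeGroup.mk q₁), hq₁val]; group
        have hcw : FreeGroup.mk q₁ = FreeGroup.mk ((x, false) ::
            (FreeGroup.invRev c₀ ++ ((y, false) :: (c₀ ++ cblk A₁)))) := by
          rw [hq₁]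
          simp only [mk_append, mk_cons, mk_invRev, letter_pos, letter_neg, mul_assoc]
        have hwt : wt q₁ = -(A₁.length : ℤ) - 2 := by
          rw [wt_eq_of_mk_eq hcw, wt_cons, wt_append, wt_cons, wt_append, wt_invRev, wt_cblk]
          simp; ring
        have hlen : A₁.length + 2 ≤ q₁.length := by
          have := wt_natAbs_le q₁
          omega
        have hClen : C.length = c₀.length + 1 + q₁.length := by
          rw [g1]; simp; omega
        refine ih A₂ (M ++ (y, c₀ ++ [(x, true)]) :: conjx x A₁) ρ x ?_ ?_
        · rw [f1, mu_append] at hμ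
          simp only [mu, mu_append, mu_conjx, List.length_append, List.length_cons,
            List.length_nil] at hμ ⊢
          omega
        · simp only [cblk_append, cblk, blk, invRev_append, invRev_cons, Bool.not_true,
            List.append_assoc, List.cons_append, List.nil_append, mk_append, mk_cons,
            mk_invRev, mk_nil, mk_cblk_conjx, FreeGroup.invRev_invRev, FreeGroup.invRev_empty,
            letter_pos, letter_neg, mul_assoc, one_mul, mul_one]
          rw [hρ, hA₁]
          group
    · -- the letter lies in ρ : done
      rw [e2] at h0; rw [e3] at h1
      refine ⟨p₀, p₁, e1, ?_, ?_⟩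
      · rw [mk_append] at h0
        rw [(mul_eq_one_iff_inv_eq.mp h0).symm]
        exact qp_inv_cblk A
      · rw [mk_append] at h1
        rw [mul_eq_one_iff_eq_inv.mp h1]
        exact qp_inv_cblk M
    · -- the letter lies in cblk M
      rw [e2] at h0; rw [e3] at h1
      obtain ⟨M₁, z, u, M₂, q₀, q₁, f1, f2, f3, f4⟩ := splitCblk M p₀ p₁ (x, true) e1
      have f2' : FreeGroup.invRev u ++ ([(z, false)] ++ u) = q₀ ++ (x, true) :: q₁ := by
        simpa [blk] using f2
      rcases split3 (FreeGroup.invRev u) [(z, false)] u q₀ q₁ (x, true) f2' with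
        ⟨c₀, c₁, g1, g2, g3⟩ | ⟨c₀, c₁, g1, g2, g3⟩ | ⟨c₀, c₁, g1, g2, g3⟩
      · -- case M-a : the letter lies in invRev u
        subst g2 g3
        rw [f3] at h0
        rw [f4] at h1
        have hu : u = FreeGroup.invRev c₁ ++ ((x, false) :: FreeGroup.invRev q₀) := by
          have hg := congrArg FreeGroup.invRev g1
          rw [FreeGroup.invRev_invRev] at hg
          rw [hg, invRev_append, invRev_cons]
          simp
        rw [hu] at h1
        simp only [List.append_assoc, List.cons_append, List.nil_append, mk_append, mk_cons,
          mk_invRev, mk_nil, letter_pos, letter_neg, mul_assoc, one_mul, mul_one] at h0 h1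
        have hρ := solve_mid (k₁ := FreeGroup.mk (cblk A)) (m := FreeGroup.mk ρ)
          (k₂ := FreeGroup.mk (cblk M₁) * FreeGroup.mk q₀)
          (by simpa only [mul_assoc] using h0)
        have hM₂ := solve_mid
          (k₁ := FreeGroup.mk c₁ * ((FreeGroup.of z)⁻¹ * ((FreeGroup.mk c₁)⁻¹ *
            ((FreeGroup.of x)⁻¹ * (FreeGroup.mk q₀)⁻¹))))
          (m := FreeGroup.mk (cblk M₂)) (k₂ := (1 : FreeGroup X))
          (by simpa only [mul_assoc, mul_one] using h1)
        have hulen : u.length = c₁.length + 1 + q₀.length := by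
          rw [hu]; simp [FreeGroup.invRev_length]; omega
        refine ih A (M₁ ++ (M₂ ++ [(z, FreeGroup.invRev c₁)])) ρ x ?_ ?_
        · rw [f1, mu_append] at hμ
          simp only [mu, mu_append, FreeGroup.invRev_length] at hμ ⊢
          omega
        · simp only [cblk_append, cblk, blk, List.append_assoc, List.cons_append,
            List.nil_append, List.append_nil, mk_append, mk_cons, mk_invRev, mk_nil,
            FreeGroup.invRev_invRev, letter_pos, letter_neg, mul_assoc, one_mul, mul_one]
          rw [hρ, hM₂]
          group
      · exfalso; cases c₀ <;> simp_all
      · -- case M-c : the letter lies in u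
        subst g3
        rw [f3, g2, g1] at h0
        rw [f4] at h1
        simp only [invRev_append, invRev_cons, Bool.not_true, List.append_assoc,
          List.cons_append, List.nil_append, mk_append, mk_cons, mk_invRev, mk_nil,
          letter_pos, letter_neg, mul_assoc, one_mul, mul_one, mul_inv_rev, inv_inv,
          FreeGroup.invRev_empty] at h0 h1
        have hulen : u.length = c₀.length + 1 + q₁.length := by
          rw [g1]; simp; omega
        by_cases hq : q₁ = []
        · -- degenerate case : break off the last block
          subst hq
          simp only [mk_nil, inv_one, one_mul] at h0 h1
          have hρ := solve_mid (k₁ := FreeGroup.mk (cblk A)) (m := FreeGroup.mk ρ)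
            (k₂ := FreeGroup.mk (cblk M₁) * ((FreeGroup.of x)⁻¹ * ((FreeGroup.mk c₀)⁻¹ *
              ((FreeGroup.of z)⁻¹ * FreeGroup.mk c₀))))
            (by simpa only [mul_assoc] using h0)
          refine ih ((z, c₀) :: A) M₁ ρ x ?_ ?_
          · rw [f1, mu_append] at hμ
            simp only [mu, mu_append, List.length_append, List.length_cons,
              List.length_nil] at hμ ⊢
            omega
          · simp only [cblk_append, cblk, blk, List.append_assoc, List.cons_append,
              List.nil_append, mk_append, mk_cons, mk_invRev, mk_nil,
              letter_pos, letter_neg, mul_assoc, one_mul, mul_one]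
            rw [hρ]
            group
        · -- non-degenerate : strictly smaller measure
          have hρ := solve_mid (k₁ := FreeGroup.mk (cblk A)) (m := FreeGroup.mk ρ)
            (k₂ := FreeGroup.mk (cblk M₁) * ((FreeGroup.mk q₁)⁻¹ * ((FreeGroup.of x)⁻¹ *
              ((FreeGroup.mk c₀)⁻¹ * ((FreeGroup.of z)⁻¹ * FreeGroup.mk c₀)))))
            (by simpa only [mul_assoc] using h0)
          have hM₂ : FreeGroup.mk (cblk M₂) = (FreeGroup.mk q₁)⁻¹ :=
            (mul_eq_one_iff_inv_eq.mp h1).symm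
          have hqlen : 1 ≤ q₁.length := List.length_pos_iff.mpr hq
          refine ih A (M₁ ++ (M₂ ++ [(z, c₀ ++ [(x, true)])])) ρ x ?_ ?_
          · rw [f1, mu_append] at hμ
            simp only [mu, mu_append, List.length_append, List.length_cons,
              List.length_nil] at hμ ⊢
            omega
          · simp only [cblk_append, cblk, blk, invRev_append, invRev_cons, Bool.not_true,
              List.append_assoc, List.cons_append, List.nil_append, List.append_nil,
              mk_append, mk_cons, mk_invRev, mk_nil, FreeGroup.invRev_invRev,
              FreeGroup.invRev_empty, letter_pos, letter_neg, mul_assoc, one_mul, mul_one]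
            rw [hρ, hM₂]
            group

end QPMain

namespace QPFinal
open QPDev QPDev2 QPDev3 QPDev4 QPDev5 QPMain

variable {X : Type*}

theorem qp_conj (c w : FreeGroup X) (h : QuasiPositive w) :
    QuasiPositive (c⁻¹ * w * c) := by
  obtain ⟨lw, hlw⟩ := h
  refine ⟨lw.map fun p => (p.1, p.2 * c), ?_⟩
  rw [hlw]
  clear hlw
  induction lw with
  | nil => simp
  | cons p lw ih =>
    simp only [List.map_cons, List.prod_cons]
    rw [← ih]
    group

theorem mk_cblk_of_cert [DecidableEq X] (lc : List (X × FreeGroup X)) :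
    FreeGroup.mk (cblk ((lc.map fun p => (p.1, FreeGroup.toWord p.2)).reverse)) =
      ((lc.map fun p => p.2⁻¹ * FreeGroup.of p.1 * p.2).prod)⁻¹ := by
  induction lc with
  | nil => simp [cblk, mk_nil]
  | cons p lc ih =>
    simp only [List.map_cons, List.reverse_cons, List.prod_cons, cblk_append, mk_append]
    rw [ih]
    simp only [cblk, mk_append, mk_blk, mk_nil, FreeGroup.mk_toWord, mul_one]
    group

end QPFinal

open QPDev QPDev2 QPDev3 QPDev4 QPDev5 QPMain QPFinal

/-- A letter `(x, tt)` stands for `x` and `(x, ff)` stands for `x⁻¹`;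
`FreeGroup.mk l` is the element of `F(X)` represented by the word `l`. -/
theorem good_matching_inverse_letter_exists {X : Type*}
    (l : List (X × Bool)) (i : Fin l.length)
    (hneg : (l.get i).2 = false)
    (hqp : QuasiPositive (FreeGroup.mk l) ∨ FreeGroup.mk l = 1) :
    ∃ wL wR : List (X × Bool),
      l.drop i ++ l.take i = l.get i :: (wL ++ ((l.get i).1, true) :: wR) ∧
      QuasiPositive (FreeGroup.mk wL) ∧ QuasiPositive (FreeGroup.mk wR) := by
  classical
  set x := (l.get i).1 with hx
  have hi : l.get i = (x, false) := by
    rw [hx]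
    exact Prod.ext rfl hneg
  have hdrop : l.drop i = l.get i :: l.drop (i + 1) := by
    rw [List.get_eq_getElem]
    exact List.drop_eq_getElem_cons i.2
  set q : List (X × Bool) := l.drop (i + 1) ++ l.take i with hq
  have hrq : l.drop i ++ l.take i = (x, false) :: q := by
    rw [hdrop, hi, hq, List.cons_append]
  -- the rotated word is quasipositive
  have hl : FreeGroup.mk l = FreeGroup.mk (l.take i) * FreeGroup.mk (l.drop i) := by
    conv_lhs => rw [← List.take_append_drop (i : ℕ) l]
    rw [mk_append]
  have hr : FreeGroup.mk (l.drop i ++ l.take i) =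
      (FreeGroup.mk (l.take i))⁻¹ * FreeGroup.mk l * FreeGroup.mk (l.take i) := by
    rw [mk_append, hl]
    group
  have hrqp : QuasiPositive (FreeGroup.mk (l.drop i ++ l.take i)) := by
    rcases hqp with h | h
    · rw [hr]; exact qp_conj _ _ h
    · rw [hr, h]; exact ⟨[], by simp only [List.map_nil, List.prod_nil]; group⟩
  rw [hrq] at hrqp
  obtain ⟨lc, hlc⟩ := hrqp
  -- set up the instance of the main lemma
  have hmk : FreeGroup.mk ((x, false) :: q) = (FreeGroup.of x)⁻¹ * FreeGroup.mk q := by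
    rw [mk_cons, letter_neg]
  set M₀ : List (X × List (X × Bool)) := (lc.map fun p => (p.1, FreeGroup.toWord p.2)).reverse
    with hM₀
  have hcert : FreeGroup.mk (cblk M₀) = (FreeGroup.mk ((x, false) :: q))⁻¹ := by
    rw [hM₀, mk_cblk_of_cert, hlc]
  have hmain : FreeGroup.mk (cblk ([] : List (X × List (X × Bool))) ++ (q ++ cblk M₀)) =
      FreeGroup.of x := by
    have : cblk ([] : List (X × List (X × Bool))) = [] := rfl
    rw [this, List.nil_append, mk_append, hcert, hmk]
    group
  obtain ⟨qA, qB, hsp, hA, hB⟩ :=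
    main (mu ([] : List (X × List (X × Bool))) + mu M₀ + 1) [] M₀ q x (by omega) hmain
  exact ⟨qA, qB, by rw [hrq, hi, hsp], hA, hB⟩
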